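/- Let u₁,…,u_m be orthonormal vectors in ℝ^d and κ > 3. Define R_{ij} = (κ−3)·Σ_{l=1}^d ⟨e_l,u_i⟩²⟨e_l,u_j⟩² / [sqrt(2 + (κ−3)Σ_l ⟨e_l,u_i⟩⁴)·sqrt(2 + (κ−3)Σ_l ⟨e_l,u_j⟩⁴)] for i ≠ j. Then Σ_{i≠j} R_{ij} ≤ ((κ−3)/2)·m. -/

import Mathlib

/-- Off-diagonal correlation sum bound: for orthonormal u₁,…,u_m in ℝ^d and κ > 3,
with R_{ij} as given, Σ_{i≠j} R_{ij} ≤ ((κ−3)/2)·m. -/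
theorem sum_offdiag_correlations_le
    {d m : ℕ} (u : Fin m → Fin d → ℝ) (κ : ℝ) (hκ : 3 < κ)
    (horth : ∀ i j, (∑ l, u i l * u j l) = if i = j then 1 else 0) :
    (∑ i, ∑ j,
        if i ≠ j then
          ((κ - 3) * ∑ l, (u i l) ^ 2 * (u j l) ^ 2) /
            (Real.sqrt (2 + (κ - 3) * ∑ l, (u i l) ^ 4) *
              Real.sqrt (2 + (κ - 3) * ∑ l, (u j l) ^ 4))
        else 0) ≤ ((κ - 3) / 2) * m := by
  have hk3 : (0:ℝ) ≤ κ - 3 := by linarith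
  -- Bessel: for each coordinate l, ∑ j, (u j l)^2 ≤ 1
  have bessel : ∀ l, (∑ j, (u j l) ^ 2) ≤ 1 := by
    intro l
    set S := ∑ j, (u j l) ^ 2 with hS
    have hSnn : 0 ≤ S := Finset.sum_nonneg fun _ _ => sq_nonneg _
    have hsum : (∑ l', (∑ j, u j l * u j l') ^ 2) = S := by
      have h1 : ∀ l', (∑ j, u j l * u j l') ^ 2
          = ∑ j, ∑ k, (u j l * u k l) * (u j l' * u k l') := by
        intro l'
        rw [sq, Finset.sum_mul_sum]
        apply Finset.sum_congr rfl; intro j _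
        apply Finset.sum_congr rfl; intro k _
        ring
      simp_rw [h1]
      rw [Finset.sum_comm]
      have h2 : ∀ j, (∑ l', ∑ k, (u j l * u k l) * (u j l' * u k l'))
          = (u j l) ^ 2 := by
        intro j
        rw [Finset.sum_comm]
        have : ∀ k, (∑ l', (u j l * u k l) * (u j l' * u k l'))
            = (u j l * u k l) * (if j = k then 1 else 0) := by
          intro k
          rw [← horth j k, Finset.mul_sum]
        simp_rw [this]
        simp [sq]
      simp_rw [h2]
      exact hS.symm
    have hle : S ^ 2 ≤ ∑ l', (∑ j, u j l * u j l') ^ 2 := by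
      have hvl : (∑ j, u j l * u j l) = S := by
        simp [hS, sq]
      calc S ^ 2 = (∑ j, u j l * u j l) ^ 2 := by rw [hvl]
        _ ≤ ∑ l', (∑ j, u j l * u j l') ^ 2 :=
          Finset.single_le_sum (f := fun l' => (∑ j, u j l * u j l') ^ 2)
            (fun l' _ => sq_nonneg _) (Finset.mem_univ l)
    rw [hsum] at hle
    nlinarith
  -- each u_i is unit
  have hunit : ∀ i, (∑ l, (u i l) ^ 2) = 1 := by
    intro i
    have := horth i i
    simpa [sq] using this
  -- bound each term
  have hterm : ∀ i j : Fin m,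
      (if i ≠ j then
          ((κ - 3) * ∑ l, (u i l) ^ 2 * (u j l) ^ 2) /
            (Real.sqrt (2 + (κ - 3) * ∑ l, (u i l) ^ 4) *
              Real.sqrt (2 + (κ - 3) * ∑ l, (u j l) ^ 4))
        else 0)
      ≤ ((κ - 3) * ∑ l, (u i l) ^ 2 * (u j l) ^ 2) / 2 := by
    intro i j
    have hNnn : 0 ≤ (κ - 3) * ∑ l, (u i l) ^ 2 * (u j l) ^ 2 :=
      mul_nonneg hk3 (Finset.sum_nonneg fun _ _ =>
        mul_nonneg (sq_nonneg _) (sq_nonneg _))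
    by_cases h : i = j
    · simp [h]
      positivity
    · simp only [h, ne_eq, not_false_eq_true, if_true]
      have hden : ∀ k : Fin m,
          Real.sqrt 2 ≤ Real.sqrt (2 + (κ - 3) * ∑ l, (u k l) ^ 4) := by
        intro k
        apply Real.sqrt_le_sqrt
        have : 0 ≤ (κ - 3) * ∑ l, (u k l) ^ 4 :=
          mul_nonneg hk3 (Finset.sum_nonneg fun _ _ => by positivity)
        linarith
      have h2 : (2:ℝ) ≤
          Real.sqrt (2 + (κ - 3) * ∑ l, (u i l) ^ 4) *
            Real.sqrt (2 + (κ - 3) * ∑ l, (u j l) ^ 4) := by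
        calc (2:ℝ) = Real.sqrt 2 * Real.sqrt 2 := by
              rw [Real.mul_self_sqrt (by norm_num)]
          _ ≤ _ := by
              apply mul_le_mul (hden i) (hden j) (Real.sqrt_nonneg _)
                (Real.sqrt_nonneg _)
      gcongr
  calc (∑ i, ∑ j,
        if i ≠ j then
          ((κ - 3) * ∑ l, (u i l) ^ 2 * (u j l) ^ 2) /
            (Real.sqrt (2 + (κ - 3) * ∑ l, (u i l) ^ 4) *
              Real.sqrt (2 + (κ - 3) * ∑ l, (u j l) ^ 4))
        else 0)
      ≤ ∑ i, ∑ j, ((κ - 3) * ∑ l, (u i l) ^ 2 * (u j l) ^ 2) / 2 := by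
        apply Finset.sum_le_sum; intro i _
        apply Finset.sum_le_sum; intro j _
        exact hterm i j
    _ = ((κ - 3) / 2) * ∑ l, (∑ i, (u i l) ^ 2) * (∑ j, (u j l) ^ 2) := by
        have L : (∑ i, ∑ j, ((κ - 3) * ∑ l, (u i l) ^ 2 * (u j l) ^ 2) / 2)
            = ∑ i, ∑ j, ∑ l, (κ - 3) / 2 * ((u i l) ^ 2 * (u j l) ^ 2) := by
          apply Finset.sum_congr rfl; intro i _
          apply Finset.sum_congr rfl; intro j _
          rw [Finset.mul_sum, Finset.sum_div]
          apply Finset.sum_congr rfl; intro l _; ring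
        have R : ((κ - 3) / 2) * ∑ l, (∑ i, (u i l) ^ 2) * (∑ j, (u j l) ^ 2)
            = ∑ l, ∑ i, ∑ j, (κ - 3) / 2 * ((u i l) ^ 2 * (u j l) ^ 2) := by
          rw [Finset.mul_sum]
          apply Finset.sum_congr rfl; intro l _
          rw [Finset.sum_mul_sum, Finset.mul_sum]
          apply Finset.sum_congr rfl; intro i _
          rw [Finset.mul_sum]
        rw [L, R]
        conv_rhs => rw [Finset.sum_comm]
        apply Finset.sum_congr rfl; intro i _
        rw [Finset.sum_comm]
    _ ≤ ((κ - 3) / 2) * ∑ l, (∑ i, (u i l) ^ 2) * 1 := by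
        apply mul_le_mul_of_nonneg_left _ (by linarith)
        apply Finset.sum_le_sum; intro l _
        exact mul_le_mul_of_nonneg_left (bessel l)
          (Finset.sum_nonneg fun _ _ => sq_nonneg _)
    _ = ((κ - 3) / 2) * m := by
        congr 1
        simp_rw [mul_one]
        rw [Finset.sum_comm]
        simp [hunit]
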